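/- Let X be a real Gaussian random variable with mean 0 and variance σ² > 0, and let D ≥ 0. Then E[ (max(|X| − D, 0))² ] ≤ σ² · exp(−D²/(2σ²)). -/

import Mathlib

open ProbabilityTheory

open MeasureTheory Real Set

/-- The Gaussian tail estimate used in the proof of Lemma 4.5: for `X ~ N(0,σ²)` with
`σ² > 0` and `D ≥ 0`, `E[(max(|X| − D, 0))²] ≤ σ² exp(−D²/(2σ²))`. -/
theorem stmt19 (σ D : ℝ) (hσ : 0 < σ ^ 2) (hD : 0 ≤ D) :
    ∫ x, max (|x| - D) 0 ^ 2 ∂(gaussianReal 0 (σ ^ 2).toNNReal)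
      ≤ σ ^ 2 * Real.exp (-D ^ 2 / (2 * σ ^ 2)) := by
  have hπ := Real.pi_pos
  set v : ℝ := σ ^ 2 with hvdef
  have hvpos : 0 < v := hσ
  have hvnn : (v.toNNReal : ℝ) = v := Real.coe_toNNReal v hvpos.le
  have hvne : v.toNNReal ≠ 0 := by
    simp only [ne_eq, Real.toNNReal_eq_zero, not_le]
    exact hvpos
  set c : ℝ := (Real.sqrt (2 * π * v))⁻¹ with hcdef
  have hc : 0 < c := by rw [hcdef]; positivity
  set e : ℝ := Real.exp (-D ^ 2 / (2 * v)) with hedef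
  set b : ℝ := (2 * v)⁻¹ with hbdef
  have hb : 0 < b := by rw [hbdef]; positivity
  set F : ℝ → ℝ := fun t => c * Real.exp (-t ^ 2 / (2 * v)) * max (t - D) 0 ^ 2 with hF
  -- Step 1: express the gaussian integral as a Lebesgue integral
  have h1 : ∫ x, max (|x| - D) 0 ^ 2 ∂(gaussianReal 0 v.toNNReal)
      = ∫ x, F |x| := by
    rw [gaussianReal_of_var_ne_zero 0 hvne]
    have hpdf : gaussianPDF 0 v.toNNReal
        = fun x => (((gaussianPDFReal 0 v.toNNReal x).toNNReal : NNReal) : ENNReal) := rfl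
    rw [hpdf]
    rw [integral_withDensity_eq_integral_smul
      ((measurable_gaussianPDFReal 0 v.toNNReal).real_toNNReal) _]
    congr 1
    ext x
    rw [NNReal.smul_def, smul_eq_mul,
      Real.coe_toNNReal _ (gaussianPDFReal_nonneg 0 v.toNNReal x)]
    simp only [hF, gaussianPDFReal, hvnn, sub_zero, sq_abs]
    rfl
  -- F vanishes on nonpositive reals
  have hF0 : ∀ x : ℝ, x ∉ Ioi (0:ℝ) → F x = 0 := by
    intro x hx
    simp only [mem_Ioi, not_lt] at hx
    have : max (x - D) 0 = 0 := max_eq_right (by linarith)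
    simp [hF, this]
  -- the dominating function
  set G : ℝ → ℝ := fun x => e * (c * (max x 0 ^ 2 * Real.exp (-b * x ^ 2))) with hG
  have hbase : Integrable (fun x : ℝ => x ^ (2:ℝ) * Real.exp (-b * x ^ 2)) :=
    integrable_rpow_mul_exp_neg_mul_sq hb (by norm_num)
  have hmaxint : Integrable (fun x : ℝ => max x 0 ^ 2 * Real.exp (-b * x ^ 2)) := by
    refine hbase.mono' ?_ ?_
    · exact (Continuous.aestronglyMeasurable (by fun_prop))
    · refine Filter.Eventually.of_forall fun x => ?_
      rw [Real.norm_eq_abs, abs_mul, abs_of_nonneg (Real.exp_pos _).le,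
        abs_of_nonneg (by positivity : (0:ℝ) ≤ max x 0 ^ 2), Real.rpow_two]
      refine mul_le_mul_of_nonneg_right ?_ (Real.exp_pos _).le
      calc max x 0 ^ 2 ≤ |x| ^ 2 := by
            refine pow_le_pow_left₀ (le_max_right _ _) ?_ 2
            exact max_le (le_abs_self x) (abs_nonneg x)
        _ = x ^ 2 := sq_abs x
  have hGint : Integrable G := (hmaxint.const_mul c).const_mul e
  -- pointwise bound after translation
  have hpt : ∀ x : ℝ, F (x + D) ≤ G x := by
    intro x
    simp only [hF, hG, add_sub_cancel_right]
    rcases le_or_gt x 0 with hx | hx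
    · have hm : max x 0 = 0 := max_eq_right hx
      simp [hm]
    · have hm : max x 0 = x := max_eq_left hx.le
      rw [hm]
      have hexp : Real.exp (-(x + D) ^ 2 / (2 * v)) ≤ e * Real.exp (-b * x ^ 2) := by
        rw [hedef, ← Real.exp_add, Real.exp_le_exp, hbdef, neg_mul, inv_mul_eq_div,
          ← neg_div, ← add_div]
        have h2v : (0:ℝ) < 2 * v := by positivity
        rw [div_le_div_iff₀ h2v h2v]
        nlinarith [mul_nonneg hx.le hD]
      calc c * Real.exp (-(x + D) ^ 2 / (2 * v)) * x ^ 2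
          ≤ c * (e * Real.exp (-b * x ^ 2)) * x ^ 2 :=
            mul_le_mul_of_nonneg_right (mul_le_mul_of_nonneg_left hexp hc.le) (sq_nonneg x)
        _ = e * (c * (x ^ 2 * Real.exp (-b * x ^ 2))) := by ring
  -- compute the integral of the dominating function's core
  have hkey : (∫ x : ℝ, max x 0 ^ 2 * Real.exp (-b * x ^ 2))
      = b ^ (-((2:ℝ) + 1) / 2) * (1 / 2) * Real.Gamma (((2:ℝ) + 1) / 2) := by
    rw [← setIntegral_eq_integral_of_forall_compl_eq_zero
      (s := Ioi (0:ℝ)) (fun x hx => ?_)]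
    · rw [← integral_rpow_mul_exp_neg_mul_rpow (two_pos) (by norm_num) hb]
      refine setIntegral_congr_fun measurableSet_Ioi fun x hx => ?_
      rw [max_eq_left (le_of_lt hx), Real.rpow_two]
    · simp only [mem_Ioi, not_lt] at hx
      have : max x 0 = 0 := max_eq_right hx
      simp [this]
  have hs1 : 0 < Real.sqrt π := Real.sqrt_pos.mpr hπ
  have hs2 : 0 < Real.sqrt (2 * v) := Real.sqrt_pos.mpr (by positivity)
  have hgamma : Real.Gamma (((2:ℝ) + 1) / 2) = Real.sqrt π / 2 := by
    rw [show ((2:ℝ) + 1) / 2 = 1 / 2 + 1 by norm_num,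
      Real.Gamma_add_one (by norm_num), Real.Gamma_one_half_eq]
    ring
  have hbpow : b ^ (-((2:ℝ) + 1) / 2) = (2 * v) * Real.sqrt (2 * v) := by
    rw [show -((2:ℝ) + 1) / 2 = -(3 / 2) by norm_num, hbdef,
      Real.rpow_neg (by positivity), Real.inv_rpow (by positivity), inv_inv,
      show (3 / 2 : ℝ) = 1 + 1 / 2 by norm_num, Real.rpow_add (by positivity),
      Real.rpow_one, ← Real.sqrt_eq_rpow]
  have hsqrt : Real.sqrt (2 * π * v) = Real.sqrt π * Real.sqrt (2 * v) := by
    rw [show 2 * π * v = π * (2 * v) by ring, Real.sqrt_mul hπ.le]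
  calc ∫ x, max (|x| - D) 0 ^ 2 ∂(gaussianReal 0 v.toNNReal)
      = ∫ x, F |x| := h1
    _ = 2 * ∫ x in Ioi (0:ℝ), F x := integral_comp_abs
    _ = 2 * ∫ x, F x := by rw [setIntegral_eq_integral_of_forall_compl_eq_zero hF0]
    _ = 2 * ∫ x, F (x + D) := by rw [integral_add_right_eq_self F D]
    _ ≤ 2 * ∫ x, G x := by
        refine mul_le_mul_of_nonneg_left ?_ (by norm_num)
        refine integral_mono_of_nonneg (Filter.Eventually.of_forall fun x => ?_)
          hGint (Filter.Eventually.of_forall hpt)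
        simp only [hF]
        positivity
    _ = 2 * (e * (c * ∫ x, max x 0 ^ 2 * Real.exp (-b * x ^ 2))) := by
        simp only [hG, integral_const_mul]
    _ = v * e := by
        rw [hkey, hgamma, hbpow, hcdef, hsqrt]
        field_simp
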